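/- Suppose the kernel functions K_1,…,K_n are singular and J is an arbitrary n-field function, and let j ∈ {0,1,…,n}. For every q > 0 and every y ∈ S̄ with m_j(y) ≠ -∞ there exist η > 0 and a set Z ⊆ I_j(y) such that for every x ∈ S̄ with ‖x - y‖ ≤ η: (i) Z ⊆ I_j(x) and |t - x_i| ≥ η for all t ∈ Z and all i = 1,…,n (in particular Z lies in the interior of I_j(x) relative to [0,1]); (ii) m_j(x) = sup_{t ∈ Z} F(x,t); (iii) F(x,t) ≥ m_j(x) - q > -∞ for every t ∈ Z. -/

import Mathlib

open Set Filter
open scoped BigOperators Topology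

noncomputable section

/-- The real part of an extended-real-valued function. -/
def toR (K : ℝ → EReal) : ℝ → ℝ := fun t => (K t).toReal

/-- A *kernel function*: finite-valued, continuous and concave on `[-1,0)` and `(0,1]`,
never `+∞`, and with coinciding one-sided limits at `0` (given by the value `K 0`). -/
structure IsKernel (K : ℝ → EReal) : Prop where
  ne_top : ∀ t, K t ≠ ⊤
  finite_left : ∀ t ∈ Ico (-1:ℝ) 0, K t ≠ ⊥
  finite_right : ∀ t ∈ Ioc (0:ℝ) 1, K t ≠ ⊥
  cont_left : ContinuousOn (toR K) (Ico (-1:ℝ) 0)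
  cont_right : ContinuousOn (toR K) (Ioc (0:ℝ) 1)
  concave_left : ConcaveOn ℝ (Ico (-1:ℝ) 0) (toR K)
  concave_right : ConcaveOn ℝ (Ioc (0:ℝ) 1) (toR K)
  tendsto_left : Tendsto K (nhdsWithin 0 (Iio 0)) (nhds (K 0))
  tendsto_right : Tendsto K (nhdsWithin 0 (Ioi 0)) (nhds (K 0))

/-- Left one-sided derivative. -/
def Dm (f : ℝ → ℝ) (t : ℝ) : ℝ := derivWithin f (Iio t) t

/-- Right one-sided derivative. -/
def Dp (f : ℝ → ℝ) (t : ℝ) : ℝ := derivWithin f (Ioi t) t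

/-- Condition (PM_c): periodized `c`-monotonicity. -/
def PMcond (K : ℝ → EReal) (c : ℝ) : Prop :=
  ∀ t ∈ Ioo (0:ℝ) 1, c ≤ Dm (toR K) t - Dm (toR K) (t - 1)

/-- An *n-field function*: bounded above, never `+∞`, finite at more than `n` points of
`[0,1]`, where the endpoints count with weight `1/2`. -/
structure IsNField (n : ℕ) (J : ℝ → EReal) : Prop where
  ne_top : ∀ t, J t ≠ ⊤
  bdd : ∃ M : ℝ, ∀ t ∈ Icc (0:ℝ) 1, J t ≤ (M : EReal)
  count : (∃ T : Finset ℝ, ↑T ⊆ {t | t ∈ Ioo (0:ℝ) 1 ∧ J t ≠ ⊥} ∧ n + 1 ≤ T.card) ∨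
    ((∃ T : Finset ℝ, ↑T ⊆ {t | t ∈ Ioo (0:ℝ) 1 ∧ J t ≠ ⊥} ∧ n ≤ T.card) ∧
      (J 0 ≠ ⊥ ∨ J 1 ≠ ⊥))

/-- The open simplex `S`. -/
def openSimplex (n : ℕ) : Set (Fin n → ℝ) :=
  {y | StrictMono y ∧ ∀ i, y i ∈ Ioo (0:ℝ) 1}

/-- The closed simplex `S̄`. -/
def closedSimplex (n : ℕ) : Set (Fin n → ℝ) :=
  {y | Monotone y ∧ ∀ i, y i ∈ Icc (0:ℝ) 1}

/-- The left endpoint `y_j` of `I_j(y)`, with the convention `y_0 = 0`. -/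
def nodeLo {n : ℕ} (y : Fin n → ℝ) (j : ℕ) : ℝ :=
  if h : 0 < j ∧ j ≤ n then y ⟨j - 1, by omega⟩ else 0

/-- The right endpoint `y_{j+1}` of `I_j(y)`, with the convention `y_{n+1} = 1`. -/
def nodeHi {n : ℕ} (y : Fin n → ℝ) (j : ℕ) : ℝ :=
  if h : j < n then y ⟨j, h⟩ else 1

/-- The interval `I_j(y) = [y_j, y_{j+1}]`. -/
def Ij {n : ℕ} (y : Fin n → ℝ) (j : ℕ) : Set ℝ := Icc (nodeLo y j) (nodeHi y j)

/-- The sum of translates function `F(y,t) = J(t) + ∑ K_j(t - y_j)`. -/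
def SOT {n : ℕ} (K : Fin n → ℝ → EReal) (J : ℝ → EReal) (y : Fin n → ℝ) (t : ℝ) : EReal :=
  J t + ∑ i, K i (t - y i)

/-- The interval maximum `m_j(y) = sup_{t ∈ I_j(y)} F(y,t)`. -/
def mj {n : ℕ} (K : Fin n → ℝ → EReal) (J : ℝ → EReal) (y : Fin n → ℝ) (j : ℕ) : EReal :=
  ⨆ t ∈ Ij y j, SOT K J y t

/-- The regularity set `Y`. -/
def regSet {n : ℕ} (K : Fin n → ℝ → EReal) (J : ℝ → EReal) : Set (Fin n → ℝ) :=
  {y ∈ openSimplex n | ∀ j ≤ n, mj K J y j ≠ ⊥}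

/-- The difference function `Φ(y) = (m_1 - m_0, …, m_n - m_{n-1})`. -/
def PhiFun {n : ℕ} (K : Fin n → ℝ → EReal) (J : ℝ → EReal) (y : Fin n → ℝ) : Fin n → ℝ :=
  fun i => (mj K J y ((i : ℕ) + 1)).toReal - (mj K J y (i : ℕ)).toReal

/-- A map between (pseudo)metric spaces is *locally bi-Lipschitz* if every point has a
neighborhood on which the map is a bi-Lipschitz homeomorphism onto its image. -/
def LocallyBiLipschitz {α β : Type*} [PseudoMetricSpace α] [PseudoMetricSpace β]
    (f : α → β) : Prop :=
  ∀ x : α, ∃ U ∈ 𝓝 x, ∃ c C : ℝ, 0 < c ∧ ∀ a ∈ U, ∀ b ∈ U,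
    c * dist a b ≤ dist (f a) (f b) ∧ dist (f a) (f b) ≤ C * dist a b

/-- The relative interior of `[a,b] ⊆ [0,1]` in the space `[0,1]`. -/
def relIntIcc (a b : ℝ) : Set ℝ :=
  (if a = 0 then Ici a else Ioi a) ∩ (if b = 1 then Iic b else Iio b)

/-- Condition `(∞₊)`. -/
def CondInfPlus (J : ℝ → EReal) : Prop :=
  J 0 = ⊥ ∧ Tendsto J (nhdsWithin 0 (Ioi 0)) (nhds ⊥)

/-- Condition `(∞₋)`. -/
def CondInfMinus (J : ℝ → EReal) : Prop :=
  J 1 = ⊥ ∧ Tendsto J (nhdsWithin 1 (Iio 1)) (nhds ⊥)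

/-- Fenton's cusp condition `(∞'₊)`. -/
def CuspPlus (J : ℝ → EReal) : Prop :=
  ∀ M : ℝ, ∃ δ > (0:ℝ), ∀ s t : ℝ, 0 ≤ s → s < t → t ≤ δ →
    J s ≠ ⊥ → J t ≠ ⊥ → M ≤ ((J t).toReal - (J s).toReal) / (t - s)

/-- Fenton's cusp condition `(∞'₋)`. -/
def CuspMinus (J : ℝ → EReal) : Prop :=
  ∀ M : ℝ, ∃ δ > (0:ℝ), ∀ t s : ℝ, 1 - δ ≤ t → t < s → s ≤ 1 →
    J s ≠ ⊥ → J t ≠ ⊥ → ((J t).toReal - (J s).toReal) / (t - s) ≤ -M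

/-- `L : [0,1] → [0,∞)` is log-concave:
`L(λs + (1-λ)t) ≥ L(s)^λ L(t)^{1-λ}`. -/
def LogConcaveOn01 (L : ℝ → ℝ) : Prop :=
  ∀ s ∈ Icc (0:ℝ) 1, ∀ t ∈ Icc (0:ℝ) 1, ∀ l ∈ Icc (0:ℝ) 1,
    L s ^ l * L t ^ (1 - l) ≤ L (l * s + (1 - l) * t)



/-- Coercion of a finite sum of reals to `EReal`. -/
private lemma coe_sum_ereal {n : ℕ} (s : Finset (Fin n)) (f : Fin n → ℝ) :
    ((∑ i ∈ s, f i : ℝ) : EReal) = ∑ i ∈ s, (f i : EReal) :=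
  map_sum (⟨⟨Real.toEReal, EReal.coe_zero⟩, EReal.coe_add⟩ : ℝ →+ EReal) f s

private lemma u1 {a : EReal} {c e : ℝ} (h : (c : EReal) ≤ a + (e : EReal)) :
    ((c - e : ℝ) : EReal) ≤ a := by
  induction a using EReal.rec with
  | bot => rw [EReal.bot_add] at h; exact absurd (le_bot_iff.1 h) (EReal.coe_ne_bot c)
  | coe r =>
      rw [← EReal.coe_add] at h
      exact_mod_cast (by linarith [(EReal.coe_le_coe_iff.1 h)] : (c - e : ℝ) ≤ r)
  | top => exact le_top

private lemma Kcoe {K : ℝ → EReal} (hK : IsKernel K) {s : ℝ} (hs : s ∈ Icc (-1:ℝ) 1)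
    (h0 : s ≠ 0) : K s = ((toR K s : ℝ) : EReal) := by
  rcases lt_or_gt_of_ne h0 with h | h
  · exact (EReal.coe_toReal (hK.ne_top s) (hK.finite_left s ⟨hs.1, h⟩)).symm
  · exact (EReal.coe_toReal (hK.ne_top s) (hK.finite_right s ⟨h, hs.2⟩)).symm

private lemma kernel_small {K : ℝ → EReal} (hK : IsKernel K) (hs : K 0 = ⊥) (B : ℝ) :
    ∃ δ > (0:ℝ), ∀ s : ℝ, |s| ≤ δ → K s ≤ (B : EReal) := by
  have hl : ∀ᶠ s in nhdsWithin (0:ℝ) (Iio 0), K s < (B : EReal) :=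
    Tendsto.eventually_lt_const (by rw [hs]; exact EReal.bot_lt_coe B) hK.tendsto_left
  have hr : ∀ᶠ s in nhdsWithin (0:ℝ) (Ioi 0), K s < (B : EReal) :=
    Tendsto.eventually_lt_const (by rw [hs]; exact EReal.bot_lt_coe B) hK.tendsto_right
  rw [eventually_nhdsWithin_iff, Metric.eventually_nhds_iff] at hl hr
  obtain ⟨δl, hδl, Hl⟩ := hl
  obtain ⟨δr, hδr, Hr⟩ := hr
  refine ⟨min δl δr / 2, by positivity, fun s habs => ?_⟩
  rcases lt_trichotomy s 0 with h | h | h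
  · refine le_of_lt (Hl ?_ h)
    rw [Real.dist_eq, sub_zero]
    have h1 : (0:ℝ) < min δl δr := lt_min hδl hδr
    calc |s| ≤ min δl δr / 2 := habs
    _ < δl := by linarith [min_le_left δl δr]
  · rw [h, hs]; exact bot_le
  · refine le_of_lt (Hr ?_ h)
    rw [Real.dist_eq, sub_zero]
    have h1 : (0:ℝ) < min δl δr := lt_min hδl hδr
    calc |s| ≤ min δl δr / 2 := habs
    _ < δr := by linarith [min_le_right δl δr]

private lemma kernel_bdd {K : ℝ → EReal} (hK : IsKernel K) (hs : K 0 = ⊥) :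
    ∃ C : ℝ, 0 ≤ C ∧ ∀ s ∈ Icc (-1:ℝ) 1, K s ≤ (C : EReal) := by
  obtain ⟨δ, hδ, hsmall⟩ := kernel_small hK hs 0
  obtain ⟨C1, hC1⟩ := (isCompact_Icc (a := (-1:ℝ)) (b := -δ)).exists_bound_of_continuousOn
    (hK.cont_left.mono (fun t ht => ⟨ht.1, lt_of_le_of_lt ht.2 (by linarith)⟩))
  obtain ⟨C2, hC2⟩ := (isCompact_Icc (a := δ) (b := (1:ℝ))).exists_bound_of_continuousOn
    (hK.cont_right.mono (fun t ht => ⟨lt_of_lt_of_le hδ ht.1, ht.2⟩))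
  refine ⟨max (max C1 C2) 0, le_max_right _ _, fun s hsm => ?_⟩
  by_cases hd : |s| ≤ δ
  · exact (hsmall s hd).trans (by exact_mod_cast le_max_right (max C1 C2) 0)
  push_neg at hd
  rcases lt_or_ge s 0 with h | h
  · have hmem : s ∈ Icc (-1:ℝ) (-δ) := ⟨hsm.1, by rw [abs_of_neg h] at hd; linarith⟩
    rw [Kcoe hK hsm (ne_of_lt h)]
    have := (le_abs_self _).trans ((Real.norm_eq_abs _ ▸ hC1 s hmem))
    exact_mod_cast this.trans ((le_max_left C1 C2).trans (le_max_left _ _))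
  · have h0 : 0 < s := by rw [abs_of_nonneg h] at hd; linarith
    have hmem : s ∈ Icc δ (1:ℝ) := ⟨by rw [abs_of_nonneg h] at hd; linarith, hsm.2⟩
    rw [Kcoe hK hsm (ne_of_gt h0)]
    have := (le_abs_self _).trans ((Real.norm_eq_abs _ ▸ hC2 s hmem))
    exact_mod_cast this.trans ((le_max_right C1 C2).trans (le_max_left _ _))

private lemma kernel_unif {K : ℝ → EReal} (hK : IsKernel K) {δ ε : ℝ} (hδ : 0 < δ) (hε : 0 < ε) :
    ∃ η, 0 < η ∧ η ≤ δ ∧ ∀ s ∈ Icc (-1:ℝ) 1, ∀ s' ∈ Icc (-1:ℝ) 1, δ ≤ |s| → δ ≤ |s'| →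
      |s - s'| ≤ η → |toR K s - toR K s'| ≤ ε := by
  have hu1 : UniformContinuousOn (toR K) (Icc (-1:ℝ) (-δ)) :=
    isCompact_Icc.uniformContinuousOn_of_continuous
      (hK.cont_left.mono (fun t ht => ⟨ht.1, lt_of_le_of_lt ht.2 (by linarith)⟩))
  have hu2 : UniformContinuousOn (toR K) (Icc (δ:ℝ) 1) :=
    isCompact_Icc.uniformContinuousOn_of_continuous
      (hK.cont_right.mono (fun t ht => ⟨lt_of_lt_of_le hδ ht.1, ht.2⟩))
  obtain ⟨η1, hη1, H1⟩ := Metric.uniformContinuousOn_iff_le.1 hu1 ε hε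
  obtain ⟨η2, hη2, H2⟩ := Metric.uniformContinuousOn_iff_le.1 hu2 ε hε
  refine ⟨min (min η1 η2) δ, by positivity, (min_le_right _ _), ?_⟩
  intro s hsm s' hsm' hds hds' hss
  have hη1' : |s - s'| ≤ η1 := hss.trans ((min_le_left _ _).trans (min_le_left _ _))
  have hη2' : |s - s'| ≤ η2 := hss.trans ((min_le_left _ _).trans (min_le_right _ _))
  have hδ' : |s - s'| ≤ δ := hss.trans (min_le_right _ _)
  rcases lt_or_ge s 0 with h | h
  · have hs1 : s ≤ -δ := by rw [abs_of_neg h] at hds; linarith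
    have hs'1 : s' ≤ -δ := by
      rcases lt_or_ge s' 0 with h' | h'
      · rw [abs_of_neg h'] at hds'; linarith
      · exfalso
        have : δ ≤ s' := by rw [abs_of_nonneg h'] at hds'; linarith
        have := abs_le.1 hδ'
        linarith
    have := H1 s ⟨hsm.1, hs1⟩ s' ⟨hsm'.1, hs'1⟩ (by rw [Real.dist_eq]; exact hη1')
    rwa [Real.dist_eq] at this
  · have hs1 : δ ≤ s := by rw [abs_of_nonneg h] at hds; linarith
    have hs'1 : δ ≤ s' := by
      rcases lt_or_ge s' 0 with h' | h'
      · exfalso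
        have : s' ≤ -δ := by rw [abs_of_neg h'] at hds'; linarith
        have := abs_le.1 hδ'
        linarith
      · rw [abs_of_nonneg h'] at hds'; linarith
    have := H2 s ⟨hs1, hsm.2⟩ s' ⟨hs'1, hsm'.2⟩ (by rw [Real.dist_eq]; exact hη2')
    rwa [Real.dist_eq] at this

private lemma sot_shift {n : ℕ} (hn : 1 ≤ n) (K : Fin n → ℝ → EReal)
    (hK : ∀ i, IsKernel (K i)) (J : ℝ → EReal) (x y : Fin n → ℝ) (t : ℝ)
    (hxm : ∀ i, t - x i ∈ Icc (-1:ℝ) 1) (hym : ∀ i, t - y i ∈ Icc (-1:ℝ) 1)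
    (hx0 : ∀ i, t - x i ≠ 0) (hy0 : ∀ i, t - y i ≠ 0) (ε : ℝ)
    (hclose : ∀ i, |toR (K i) (t - x i) - toR (K i) (t - y i)| ≤ ε / n) :
    SOT K J x t ≤ SOT K J y t + (ε : EReal) := by
  have hxs : ∑ i, K i (t - x i) = ((∑ i, toR (K i) (t - x i) : ℝ) : EReal) := by
    rw [coe_sum_ereal]
    exact Finset.sum_congr rfl fun i _ => Kcoe (hK i) (hxm i) (hx0 i)
  have hys : ∑ i, K i (t - y i) = ((∑ i, toR (K i) (t - y i) : ℝ) : EReal) := by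
    rw [coe_sum_ereal]
    exact Finset.sum_congr rfl fun i _ => Kcoe (hK i) (hym i) (hy0 i)
  have hsum : (∑ i, toR (K i) (t - x i)) ≤ (∑ i, toR (K i) (t - y i)) + ε := by
    have h1 : ∑ i : Fin n, (toR (K i) (t - x i) - toR (K i) (t - y i)) ≤
        ∑ _i : Fin n, ε / n :=
      Finset.sum_le_sum fun i _ => (le_abs_self _).trans (hclose i)
    have hn0 : (n:ℝ) ≠ 0 := by positivity
    have h2 : ∑ _i : Fin n, (ε/n : ℝ) = ε := by
      rw [Finset.sum_const, Finset.card_univ, Fintype.card_fin, nsmul_eq_mul]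
      field_simp
    rw [Finset.sum_sub_distrib, h2] at h1
    linarith
  unfold SOT
  rw [hxs, hys, add_assoc]
  refine add_le_add_right ?_ (J t)
  exact_mod_cast hsum

/-- (Lemma 3.4, the **Z-q lemma**.) For singular kernels and an arbitrary
`n`-field function: for every `q > 0` and every `y ∈ S̄` with `m_j(y) ≠ -∞` there are
`η > 0` and a set `Z ⊆ I_j(y)` such that for each `x ∈ S̄` with `‖x - y‖ ≤ η`:
(i) `Z ⊆ I_j(x)` and `Z` has distance at least `η` to `{x_1,…,x_n}`;
(ii) `m_j(x) = sup_{t ∈ Z} F(x,t)`;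
(iii) `F(x,t) ≥ m_j(x) - q > -∞` for every `t ∈ Z`. -/
theorem Zq_lemma
    {n : ℕ} (hn : 1 ≤ n) (K : Fin n → ℝ → EReal) (J : ℝ → EReal)
    (hK : ∀ i, IsKernel (K i)) (hsing : ∀ i, K i 0 = ⊥) (hJ : IsNField n J)
    (j : ℕ) (hj : j ≤ n) :
    ∀ q : ℝ, 0 < q → ∀ y ∈ closedSimplex n, mj K J y j ≠ ⊥ →
      ∃ η > (0:ℝ), ∃ Z : Set ℝ, Z ⊆ Ij y j ∧
        ∀ x ∈ closedSimplex n, dist x y ≤ η →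
          (Z ⊆ Ij x j ∧ ∀ t ∈ Z, ∀ i, η ≤ |t - x i|) ∧
          mj K J x j = (⨆ t ∈ Z, SOT K J x t) ∧
          ∀ t ∈ Z, mj K J x j - (q : EReal) ≤ SOT K J x t ∧
            ⊥ < mj K J x j - (q : EReal) := by
  intro q hq y hy hmbot
  obtain ⟨hy1, hy2⟩ := hy
  have hy' : y ∈ closedSimplex n := ⟨hy1, hy2⟩
  -- basic positivity
  have hn0 : (0:ℝ) < n := by exact_mod_cast Nat.lt_of_lt_of_le Nat.zero_lt_one hn
  have i₀ : Fin n := ⟨0, hn⟩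
  -- intervals lie in [0,1]
  have hIj01 : ∀ x : Fin n → ℝ, x ∈ closedSimplex n → Ij x j ⊆ Icc (0:ℝ) 1 := by
    intro x hx t ht
    obtain ⟨ht1, ht2⟩ := ht
    constructor
    · refine le_trans ?_ ht1
      unfold nodeLo
      split
      · exact (hx.2 _).1
      · exact le_refl 0
    · refine le_trans ht2 ?_
      unfold nodeHi
      split
      · exact (hx.2 _).2
      · exact le_refl 1
  have hKsub : ∀ (x : Fin n → ℝ), x ∈ closedSimplex n → ∀ t ∈ Icc (0:ℝ) 1, ∀ i : Fin n,
      t - x i ∈ Icc (-1:ℝ) 1 := by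
    intro x hx t ht i
    have h1 := (hx.2 i).1
    have h2 := (hx.2 i).2
    exact ⟨by linarith [ht.1, ht.2], by linarith [ht.1, ht.2]⟩
  -- bounds
  obtain ⟨M, hM⟩ := hJ.bdd
  choose C hC using fun i => kernel_bdd (hK i) (hsing i)
  set Csum := ∑ i, C i with hCsum_def
  have hSOTle : ∀ x ∈ closedSimplex n, ∀ t ∈ Icc (0:ℝ) 1,
      SOT K J x t ≤ ((M + Csum : ℝ) : EReal) := by
    intro x hx t ht
    unfold SOT
    have h1 : ∑ i, K i (t - x i) ≤ ((Csum : ℝ) : EReal) := by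
      rw [show ((Csum:ℝ):EReal) = ∑ i, ((C i : ℝ):EReal) from coe_sum_ereal _ _]
      exact Finset.sum_le_sum fun i _ => (hC i).2 _ (hKsub x hx t ht i)
    calc J t + ∑ i, K i (t - x i) ≤ (M:EReal) + ((Csum:ℝ):EReal) := add_le_add (hM t ht) h1
    _ = ((M + Csum : ℝ):EReal) := (EReal.coe_add M Csum).symm
  have hm_top : mj K J y j ≠ ⊤ := by
    intro h
    have h2 : mj K J y j ≤ ((M + Csum : ℝ):EReal) :=
      iSup₂_le fun t ht => hSOTle y hy' t (hIj01 y hy' ht)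
    rw [h] at h2
    exact (EReal.coe_ne_top _) (top_le_iff.1 h2)
  set mr := (mj K J y j).toReal with hmr_def
  have hm : mj K J y j = (mr : EReal) := (EReal.coe_toReal hm_top hmbot).symm
  -- near-node smallness
  choose δf hδfpos hδf using fun i => kernel_small (hK i) (hsing i) ((mr - q) - M - Csum + C i)
  set δA := Finset.univ.inf' ⟨i₀, Finset.mem_univ _⟩ δf with hδA_def
  have hδA : 0 < δA := (Finset.lt_inf'_iff _).2 fun i _ => hδfpos i
  have hδAle : ∀ i, δA ≤ δf i := fun i => Finset.inf'_le _ (Finset.mem_univ i)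
  have hA : ∀ x ∈ closedSimplex n, ∀ t ∈ Icc (0:ℝ) 1, ∀ i : Fin n, |t - x i| ≤ δA →
      SOT K J x t ≤ ((mr - q : ℝ) : EReal) := by
    intro x hx t ht i hnear
    unfold SOT
    have hsplit : ∑ k, K k (t - x k)
        = K i (t - x i) + ∑ k ∈ Finset.univ.erase i, K k (t - x k) :=
      (Finset.add_sum_erase _ _ (Finset.mem_univ i)).symm
    have h1 : K i (t - x i) ≤ (((mr - q) - M - Csum + C i : ℝ) : EReal) :=
      hδf i _ (le_trans hnear (hδAle i))
    have h2 : ∑ k ∈ Finset.univ.erase i, K k (t - x k) ≤ ((Csum - C i : ℝ) : EReal) := by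
      have hCsum : ∑ k ∈ Finset.univ.erase i, C k = Csum - C i := by
        have h3 := Finset.add_sum_erase Finset.univ C (Finset.mem_univ i)
        rw [← hCsum_def] at h3
        linarith
      rw [← hCsum, coe_sum_ereal]
      exact Finset.sum_le_sum fun k _ => (hC k).2 _ (hKsub x hx t ht k)
    calc J t + ∑ k, K k (t - x k)
        ≤ (M:EReal) + ((((mr - q) - M - Csum + C i : ℝ):EReal) + ((Csum - C i:ℝ):EReal)) := by
          rw [hsplit]; exact add_le_add (hM t ht) (add_le_add h1 h2)
    _ = ((mr - q : ℝ):EReal) := by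
          rw [← EReal.coe_add, ← EReal.coe_add]
          norm_cast
          ring
  -- uniform continuity data
  have hδA4 : (0:ℝ) < δA/4 := by linarith
  have hqn : (0:ℝ) < q/16/n := by positivity
  choose ηf hηf using fun i => kernel_unif (hK i) hδA4 hqn
  set η := min (Finset.univ.inf' ⟨i₀, Finset.mem_univ _⟩ ηf) (δA/8) with hη_def
  have hηpos : 0 < η := lt_min ((Finset.lt_inf'_iff _).2 fun i _ => (hηf i).1) (by linarith)
  have hηle : ∀ i, η ≤ ηf i :=
    fun i => (min_le_left _ _).trans (Finset.inf'_le _ (Finset.mem_univ i))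
  have hη8 : η ≤ δA/8 := min_le_right _ _
  -- shift lemma specialization
  have hshift : ∀ u v : Fin n → ℝ, u ∈ closedSimplex n → v ∈ closedSimplex n →
      (∀ i, |u i - v i| ≤ η) → ∀ t ∈ Icc (0:ℝ) 1,
      (∀ i, δA/4 ≤ |t - u i|) → (∀ i, δA/4 ≤ |t - v i|) →
      SOT K J u t ≤ SOT K J v t + ((q/16 : ℝ) : EReal) := by
    intro u v hu hv huv t ht hu' hv'
    refine sot_shift hn K hK J u v t (hKsub u hu t ht) (hKsub v hv t ht)
      (fun i h => by have h9 := hu' i; rw [h, abs_zero] at h9; linarith)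
      (fun i h => by have h9 := hv' i; rw [h, abs_zero] at h9; linarith) (q/16) (fun i => ?_)
    refine (hηf i).2.2 (t - u i) (hKsub u hu t ht i) (t - v i) (hKsub v hv t ht i)
      (hu' i) (hv' i) ?_
    rw [show (t - u i) - (t - v i) = -(u i - v i) by ring, abs_neg]
    exact (huv i).trans (hηle i)
  -- define Z
  set Z : Set ℝ := {t | t ∈ Ij y j ∧ (∀ i, δA/2 ≤ |t - y i|) ∧
      ((mr - q/4 : ℝ) : EReal) ≤ SOT K J y t} with hZ_def
  have hZsubIjy : Z ⊆ Ij y j := fun t ht => ht.1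
  -- extract t*
  have hlt0 : ((mr - q/16 : ℝ) : EReal) < mj K J y j := by
    rw [hm]; exact_mod_cast (by linarith : (mr - q/16 : ℝ) < mr)
  have hts_ex : ∃ t, ∃ _ : t ∈ Ij y j, ((mr - q/16:ℝ):EReal) < SOT K J y t := by
    unfold mj at hlt0
    obtain ⟨t, htl⟩ := lt_iSup_iff.1 hlt0
    obtain ⟨htm, h⟩ := lt_iSup_iff.1 htl
    exact ⟨t, htm, h⟩
  obtain ⟨tstar, hts, htsv⟩ := hts_ex
  have hts01 : tstar ∈ Icc (0:ℝ) 1 := hIj01 y hy' hts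
  have htsnodes : ∀ i, δA < |tstar - y i| := by
    intro i
    by_contra hcon
    push_neg at hcon
    have h5 := hA y hy' tstar hts01 i hcon
    have h6 : ((mr - q/16:ℝ):EReal) < ((mr - q:ℝ):EReal) := htsv.trans_le h5
    have h7 := EReal.coe_lt_coe_iff.1 h6
    linarith
  have htsZ : tstar ∈ Z := by
    refine ⟨hts, fun i => by linarith [htsnodes i], ?_⟩
    refine le_trans ?_ (le_of_lt htsv)
    exact_mod_cast (by linarith : (mr - q/4 : ℝ) ≤ mr - q/16)
  refine ⟨η, hηpos, Z, hZsubIjy, ?_⟩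
  intro x hx hdist
  obtain ⟨hx1, hx2⟩ := hx
  have hx' : x ∈ closedSimplex n := ⟨hx1, hx2⟩
  have hxyd : ∀ i, |x i - y i| ≤ η := by
    intro i
    have h := dist_le_pi_dist x y i
    rw [Real.dist_eq] at h
    exact h.trans hdist
  have habs : ∀ t : ℝ, ∀ i, |t - y i| - η ≤ |t - x i| ∧ |t - x i| - η ≤ |t - y i| := by
    intro t i
    have h := abs_sub_abs_le_abs_sub (t - y i) (t - x i)
    have h' := abs_sub_abs_le_abs_sub (t - x i) (t - y i)
    rw [show (t - y i) - (t - x i) = x i - y i by ring] at h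
    rw [show (t - x i) - (t - y i) = -(x i - y i) by ring, abs_neg] at h'
    exact ⟨by linarith [hxyd i], by linarith [hxyd i]⟩
  -- (i)
  have hZIjx : Z ⊆ Ij x j := by
    intro t ht
    obtain ⟨⟨hty1, hty2⟩, htn, -⟩ := ht
    constructor
    · unfold nodeLo at hty1 ⊢
      split
      case isTrue hc =>
        rw [dif_pos hc] at hty1
        have h3 := htn ⟨j-1, by omega⟩
        rw [abs_of_nonneg (by linarith)] at h3
        have h5 := abs_le.1 (hxyd ⟨j-1, by omega⟩)
        linarith
      case isFalse hc => exact (hIj01 y hy' ⟨hty1, hty2⟩).1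
    · unfold nodeHi at hty2 ⊢
      split
      case isTrue hc =>
        rw [dif_pos hc] at hty2
        have h3 := htn ⟨j, hc⟩
        rw [abs_of_nonpos (by linarith), neg_sub] at h3
        have h5 := abs_le.1 (hxyd ⟨j, hc⟩)
        linarith
      case isFalse hc => exact (hIj01 y hy' ⟨hty1, hty2⟩).2
  have hZfarx : ∀ t ∈ Z, ∀ i, η ≤ |t - x i| := by
    intro t ht i
    have h1 := (habs t i).1
    have h2 := ht.2.1 i
    linarith
  have hZx_far : ∀ t ∈ Z, ∀ i, δA/4 ≤ |t - x i| := by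
    intro t ht i
    have h1 := (habs t i).1
    have h2 := ht.2.1 i
    linarith
  have hZy_far : ∀ t ∈ Z, ∀ i, δA/4 ≤ |t - y i| := by
    intro t ht i
    have h2 := ht.2.1 i
    linarith
  have hyx_shift : ∀ t ∈ Z, SOT K J y t ≤ SOT K J x t + ((q/16:ℝ):EReal) := by
    intro t ht
    exact hshift y x hy' hx' (fun i => by rw [abs_sub_comm]; exact hxyd i) t
      (hIj01 y hy' ht.1) (hZy_far t ht) (hZx_far t ht)
  have hxy_shift : ∀ t ∈ Z, SOT K J x t ≤ SOT K J y t + ((q/16:ℝ):EReal) := by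
    intro t ht
    exact hshift x y hx' hy' hxyd t (hIj01 y hy' ht.1) (hZx_far t ht) (hZy_far t ht)
  -- t ∈ Ij x far from nodes lies in Ij y
  have hIxy : ∀ t ∈ Ij x j, (∀ i, δA < |t - x i|) → t ∈ Ij y j := by
    intro t ht hfar
    obtain ⟨htx1, htx2⟩ := ht
    constructor
    · unfold nodeLo at htx1 ⊢
      split
      case isTrue hc =>
        rw [dif_pos hc] at htx1
        have h3 := hfar ⟨j-1, by omega⟩
        rw [abs_of_nonneg (by linarith)] at h3
        have h5 := abs_le.1 (hxyd ⟨j-1, by omega⟩)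
        linarith
      case isFalse hc => exact (hIj01 x hx' ⟨htx1, htx2⟩).1
    · unfold nodeHi at htx2 ⊢
      split
      case isTrue hc =>
        rw [dif_pos hc] at htx2
        have h3 := hfar ⟨j, hc⟩
        rw [abs_of_nonpos (by linarith), neg_sub] at h3
        have h5 := abs_le.1 (hxyd ⟨j, hc⟩)
        linarith
      case isFalse hc => exact (hIj01 x hx' ⟨htx1, htx2⟩).2
  -- upper bound on mj x
  have hup : mj K J x j ≤ max (⨆ t ∈ Z, SOT K J x t) ((mr - q/4 + q/16 : ℝ) : EReal) := by
    unfold mj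
    refine iSup₂_le fun t ht => ?_
    have ht01 : t ∈ Icc (0:ℝ) 1 := hIj01 x hx' ht
    by_cases hnear : ∃ i, |t - x i| ≤ δA
    · obtain ⟨i, hi⟩ := hnear
      refine le_trans (hA x hx' t ht01 i hi) (le_trans ?_ (le_max_right _ _))
      exact_mod_cast (by linarith : (mr - q : ℝ) ≤ mr - q/4 + q/16)
    push_neg at hnear
    have hfarx : ∀ i, δA/4 ≤ |t - x i| := fun i => by linarith [hnear i]
    have hfary : ∀ i, δA/4 ≤ |t - y i| := fun i => by
      have h := (habs t i).2
      linarith [hnear i]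
    have htyIj : t ∈ Ij y j := hIxy t ht hnear
    by_cases hZt : t ∈ Z
    · exact le_trans (le_iSup₂ (f := fun t (_ : t ∈ Z) => SOT K J x t) t hZt) (le_max_left _ _)
    · have hfary2 : ∀ i, δA/2 ≤ |t - y i| := fun i => by
        have h := (habs t i).2
        linarith [hnear i]
      have hlt' : SOT K J y t ≤ ((mr - q/4:ℝ):EReal) := by
        by_contra hcon
        push_neg at hcon
        exact hZt ⟨htyIj, hfary2, le_of_lt hcon⟩
      refine le_trans (hshift x y hx' hy' hxyd t ht01 hfarx hfary) (le_trans ?_ (le_max_right _ _))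
      calc SOT K J y t + ((q/16:ℝ):EReal) ≤ ((mr - q/4:ℝ):EReal) + ((q/16:ℝ):EReal) :=
            add_le_add_left hlt' _
      _ = ((mr - q/4 + q/16:ℝ):EReal) := (EReal.coe_add _ _).symm
  -- lower bound on the sup over Z
  have hstar : ((mr - q/8:ℝ):EReal) ≤ SOT K J x tstar := by
    have h := u1 (le_trans (le_of_lt htsv) (hyx_shift tstar htsZ))
    refine le_trans ?_ h
    exact_mod_cast (by linarith : (mr - q/8:ℝ) ≤ mr - q/16 - q/16)
  have hsZge : ((mr - q/8:ℝ):EReal) ≤ ⨆ t ∈ Z, SOT K J x t :=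
    le_trans hstar (le_iSup₂ (f := fun t (_ : t ∈ Z) => SOT K J x t) tstar htsZ)
  have hcc : ((mr - q/4 + q/16:ℝ):EReal) ≤ ⨆ t ∈ Z, SOT K J x t := by
    refine le_trans ?_ hsZge
    exact_mod_cast (by linarith : (mr - q/4 + q/16:ℝ) ≤ mr - q/8)
  have hble : mj K J x j ≤ ⨆ t ∈ Z, SOT K J x t := le_trans hup (max_le (le_refl _) hcc)
  have hge : (⨆ t ∈ Z, SOT K J x t) ≤ mj K J x j := by
    unfold mj
    exact iSup₂_le fun t ht =>
      le_iSup₂ (f := fun t (_ : t ∈ Ij x j) => SOT K J x t) t (hZIjx ht)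
  have heq : mj K J x j = ⨆ t ∈ Z, SOT K J x t := le_antisymm hble hge
  -- conclusion (iii) data
  have hsZle : (⨆ t ∈ Z, SOT K J x t) ≤ ((mr + q/16:ℝ):EReal) := by
    refine iSup₂_le fun t ht => ?_
    have h2 : SOT K J y t ≤ (mr:EReal) := by
      rw [← hm]
      exact le_iSup₂ (f := fun t (_ : t ∈ Ij y j) => SOT K J y t) t ht.1
    calc SOT K J x t ≤ SOT K J y t + ((q/16:ℝ):EReal) := hxy_shift t ht
    _ ≤ (mr:EReal) + ((q/16:ℝ):EReal) := add_le_add_left h2 _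
    _ = ((mr + q/16:ℝ):EReal) := (EReal.coe_add _ _).symm
  have hmxle : mj K J x j ≤ ((mr + q/16:ℝ):EReal) := hble.trans hsZle
  have hZlow : ∀ t ∈ Z, ((mr - q/4 - q/16 : ℝ):EReal) ≤ SOT K J x t := fun t ht =>
    u1 (le_trans ht.2.2 (hyx_shift t ht))
  refine ⟨⟨hZIjx, hZfarx⟩, heq, fun t ht => ⟨?_, ?_⟩⟩
  · have h1 : mj K J x j - (q:EReal) ≤ ((mr + q/16:ℝ):EReal) - (q:EReal) :=
      EReal.sub_le_sub hmxle (le_refl _)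
    have h2 : ((mr + q/16:ℝ):EReal) - (q:EReal) = ((mr + q/16 - q:ℝ):EReal) :=
      (EReal.coe_sub _ _).symm
    refine le_trans h1 (le_trans ?_ (hZlow t ht))
    rw [h2]
    exact_mod_cast (by linarith : (mr + q/16 - q:ℝ) ≤ mr - q/4 - q/16)
  · have h3 : ((mr - q/8 - q:ℝ):EReal) ≤ mj K J x j - (q:EReal) := by
      have h4 := EReal.sub_le_sub (hsZge.trans hge) (le_refl (q:EReal))
      rwa [← EReal.coe_sub] at h4
    exact lt_of_lt_of_le (EReal.bot_lt_coe _) h3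


end
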